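/- arXiv:2002.00105 — 4 statements merged into one kernel-verified Lean document; each statement's English description precedes it below -/
import Mathlib

section
/- Playing a white vertex v decreases the potential f(G^D) = 5|W| + 4|B| by at least 5, and playing a blue vertex v (which has a white neighbor) decreases it by at least 5. -/
open SimpleGraph
open scoped Classical

/-- The closed neighborhood N[v] of a vertex. -/
def cN {V : Type*} (G : SimpleGraph V) (v : V) : Set V := insert v (G.neighborSet v)

/-- Closed neighborhood N[D] of a set of vertices. -/
noncomputable def nbhd {V : Type*} (G : SimpleGraph V) (D : Set V) : Set V :=
  ⋃ d ∈ D, cN G d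

/-- A vertex is white in the residual graph G^D if it is not dominated. -/
def isWhite {V : Type*} (G : SimpleGraph V) (D : Set V) (v : V) : Prop := v ∉ nbhd G D

/-- A vertex is red in G^D if its whole closed neighborhood is dominated. -/
def isRed {V : Type*} (G : SimpleGraph V) (D : Set V) (v : V) : Prop :=
  cN G v ⊆ nbhd G D

/-- A vertex is blue in G^D if it is dominated but has an undominated neighbor. -/
def isBlue {V : Type*} (G : SimpleGraph V) (D : Set V) (v : V) : Prop :=
  v ∈ nbhd G D ∧ ¬ isRed G D v

/-- The white-degree of a vertex: its number of white neighbors. -/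
noncomputable def whiteDeg {V : Type*} [Fintype V] (G : SimpleGraph V) (D : Set V) (v : V) : ℕ :=
  (Finset.univ.filter fun u => G.Adj v u ∧ isWhite G D u).card

/-- Potential function: 5 per white vertex, `wB` per blue vertex, 0 per red vertex. -/
noncomputable def pot {V : Type*} [Fintype V] (G : SimpleGraph V) (D : Set V) (wB : ℝ) : ℝ :=
  5 * ((Finset.univ.filter fun u => isWhite G D u).card : ℝ)
  + wB * ((Finset.univ.filter fun u => isBlue G D u).card : ℝ)

/-- With weights (white,blue) = (5,4), playing a white vertex decreases the potential
by at least 5, and so does playing a blue vertex (which has a white neighbor). -/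
theorem stmt_7 {V : Type*} [Fintype V] (G : SimpleGraph V) (D : Set V) (v : V) :
    (isWhite G D v → pot G (D ∪ {v}) 4 ≤ pot G D 4 - 5) ∧
    (isBlue G D v → pot G (D ∪ {v}) 4 ≤ pot G D 4 - 5) := by

  have hnb : nbhd G (D ∪ {v}) = nbhd G D ∪ cN G v := by
    simp only [nbhd, Set.biUnion_union, Set.biUnion_singleton]
  have hmono : nbhd G D ⊆ nbhd G (D ∪ {v}) := hnb ▸ Set.subset_union_left
  have hcNsub : cN G v ⊆ nbhd G (D ∪ {v}) := hnb ▸ Set.subset_union_right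
  have hvmem : v ∈ cN G v := Set.mem_insert _ _
  unfold pot
  set W := Finset.univ.filter (fun u => isWhite G D u) with hWdef
  set B := Finset.univ.filter (fun u => isBlue G D u) with hBdef
  set W' := Finset.univ.filter (fun u => isWhite G (D ∪ {v}) u) with hW'def
  set B' := Finset.univ.filter (fun u => isBlue G (D ∪ {v}) u) with hB'def
  have hWsub : W' ⊆ W := by
    intro u hu
    simp only [hWdef, hW'def, Finset.mem_filter, Finset.mem_univ, true_and] at *
    exact fun h => hu (hmono h)
  have hBBW : B' \ B ⊆ W \ W' := by
    intro u hu
    simp only [hBdef, hB'def, hWdef, hW'def, Finset.mem_sdiff, Finset.mem_filter,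
      Finset.mem_univ, true_and] at hu ⊢
    obtain ⟨⟨hu1, hu2⟩, hu3⟩ := hu
    constructor
    · intro hmem
      by_cases hr : isRed G D u
      · exact hu2 (fun x hx => hmono (hr hx))
      · exact hu3 ⟨hmem, hr⟩
    · intro h
      exact h hu1
  have hvW' : v ∉ W' := by
    simp only [hW'def, Finset.mem_filter, Finset.mem_univ, true_and]
    intro h
    exact h (hcNsub hvmem)
  have hvB' : v ∉ B' := by
    simp only [hB'def, Finset.mem_filter, Finset.mem_univ, true_and]
    rintro ⟨_, hnr⟩
    exact hnr hcNsub
  have hle : (B' \ B).card ≤ (W \ W').card := Finset.card_le_card hBBW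
  have c1 : (W \ W').card + W'.card = W.card := Finset.card_sdiff_add_card_eq_card hWsub
  have c2 : (B' \ B).card + (B' ∩ B).card = B'.card := Finset.card_sdiff_add_card_inter B' B
  have c3 : (B \ B').card + (B ∩ B').card = B.card := Finset.card_sdiff_add_card_inter B B'
  have c4 : (B' ∩ B).card = (B ∩ B').card := by rw [Finset.inter_comm]
  constructor
  · intro hwhite
    have hvW : v ∈ W := by
      simp only [hWdef, Finset.mem_filter, Finset.mem_univ, true_and]; exact hwhite
    have hins : insert v (B' \ B) ⊆ W \ W' := by
      intro u hu
      rcases Finset.mem_insert.mp hu with rfl | hu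
      · exact Finset.mem_sdiff.mpr ⟨hvW, hvW'⟩
      · exact hBBW hu
    have hvnot : v ∉ B' \ B := fun h => hvB' (Finset.mem_sdiff.mp h).1
    have hcard : (B' \ B).card + 1 ≤ (W \ W').card := by
      have := Finset.card_le_card hins
      rwa [Finset.card_insert_of_notMem hvnot] at this
    have key : 4 * (B' \ B).card + 5 ≤ 5 * (W \ W').card + 4 * (B \ B').card := by omega
    have key' : (4 : ℝ) * (B' \ B).card + 5 ≤ 5 * (W \ W').card + 4 * (B \ B').card := by
      exact_mod_cast key
    have c1' : ((W \ W').card : ℝ) + W'.card = W.card := by exact_mod_cast c1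
    have c2' : ((B' \ B).card : ℝ) + (B' ∩ B).card = B'.card := by exact_mod_cast c2
    have c3' : ((B \ B').card : ℝ) + (B ∩ B').card = B.card := by exact_mod_cast c3
    have c4' : ((B' ∩ B).card : ℝ) = (B ∩ B').card := by exact_mod_cast c4
    linarith
  · intro hblue
    obtain ⟨hv1, hv2⟩ := hblue
    obtain ⟨w, hw1, hw2⟩ := Set.not_subset.mp hv2
    have hwW : w ∈ W \ W' := by
      simp only [hWdef, hW'def, Finset.mem_sdiff, Finset.mem_filter, Finset.mem_univ, true_and]
      exact ⟨hw2, fun h => h (hcNsub hw1)⟩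
    have hvBB : v ∈ B \ B' := by
      refine Finset.mem_sdiff.mpr ⟨?_, hvB'⟩
      simp only [hBdef, Finset.mem_filter, Finset.mem_univ, true_and]
      exact ⟨hv1, hv2⟩
    have h1 : 1 ≤ (W \ W').card := Finset.card_pos.mpr ⟨w, hwW⟩
    have h2 : 1 ≤ (B \ B').card := Finset.card_pos.mpr ⟨v, hvBB⟩
    have key : 4 * (B' \ B).card + 5 ≤ 5 * (W \ W').card + 4 * (B \ B').card := by omega
    have key' : (4 : ℝ) * (B' \ B).card + 5 ≤ 5 * (W \ W').card + 4 * (B \ B').card := by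
      exact_mod_cast key
    have c1' : ((W \ W').card : ℝ) + W'.card = W.card := by exact_mod_cast c1
    have c2' : ((B' \ B).card : ℝ) + (B' ∩ B).card = B'.card := by exact_mod_cast c2
    have c3' : ((B \ B').card : ℝ) + (B ∩ B').card = B.card := by exact_mod_cast c3
    have c4' : ((B' ∩ B).card : ℝ) = (B ∩ B').card := by exact_mod_cast c4
    linarith
end

section
/- If a white vertex v in the residual graph G^D has at least three white neighbors, then playing v decreases the potential f(G^D) = 5|W| + 3|B| by at least 11. -/
open SimpleGraph
open scoped Classical

/-- A white vertex with at least three white neighbors decreases the potential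
f = 5|W| + 3|B| by at least 11 when played. -/
theorem stmt_8 {V : Type*} [Fintype V] (G : SimpleGraph V) (D : Set V) (v : V)
    (hv : isWhite G D v) (h3 : 3 ≤ whiteDeg G D v) :
    pot G (D ∪ {v}) 3 ≤ pot G D 3 - 11 := by
  classical
  have hnb : nbhd G (D ∪ {v}) = nbhd G D ∪ cN G v := by
    simp [nbhd, Set.biUnion_union, Set.union_comm]
  unfold pot
  unfold whiteDeg at h3
  set S : Finset V := Finset.univ.filter (fun u => G.Adj v u ∧ isWhite G D u) with hS
  set W : Finset V := Finset.univ.filter (fun u => isWhite G D u) with hW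
  set B : Finset V := Finset.univ.filter (fun u => isBlue G D u) with hB
  set W' : Finset V := Finset.univ.filter (fun u => isWhite G (D ∪ {v}) u) with hW'
  set B' : Finset V := Finset.univ.filter (fun u => isBlue G (D ∪ {v}) u) with hB'
  have hvS : v ∉ S := by simp [hS]
  have hSW : S ⊆ W := by
    intro u hu
    simp only [hS, Finset.mem_filter] at hu
    simp [hW, hu.2.2]
  have hins : insert v S ⊆ W := by
    intro u hu
    rcases Finset.mem_insert.mp hu with rfl | hu
    · simp [hW, hv]
    · exact hSW hu
  have hvred : isRed G (D ∪ {v}) v := by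
    rw [isRed, hnb]; intro x hx; exact Or.inr hx
  have hW'sub : W' ⊆ W \ insert v S := by
    intro u hu
    simp only [hW', Finset.mem_filter] at hu
    have hu' := hu.2
    rw [isWhite, hnb, Set.mem_union] at hu'
    push_neg at hu'
    rw [Finset.mem_sdiff]
    constructor
    · simp [hW]; exact hu'.1
    · intro hmem
      rcases Finset.mem_insert.mp hmem with rfl | hmem
      · exact hu'.2 (by simp [cN])
      · simp only [hS, Finset.mem_filter] at hmem
        exact hu'.2 (by simp [cN, hmem.2.1])
  have hB'sub : B' ⊆ B ∪ S := by
    intro u hu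
    simp only [hB', Finset.mem_filter] at hu
    obtain ⟨hmem, hnred⟩ := hu.2
    rw [Finset.mem_union]
    by_cases hw : isWhite G D u
    · right
      rw [hnb, Set.mem_union] at hmem
      have hucN : u ∈ cN G v := hmem.resolve_left hw
      have hne : u ≠ v := by
        rintro rfl; exact hnred hvred
      have hadj : G.Adj v u := by
        rcases Set.mem_insert_iff.mp hucN with rfl | h
        · exact absurd rfl hne
        · exact h
      simp [hS, hadj, hw]
    · left
      have humem : u ∈ nbhd G D := by
        by_contra h; exact hw h
      have hnr : ¬ isRed G D u := by
        intro hr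
        apply hnred
        intro x hx
        rw [hnb]; exact Or.inl (hr hx)
      rw [hB, Finset.mem_filter]; exact ⟨Finset.mem_univ _, humem, hnr⟩
  have hdisj : Disjoint W' (insert v S) := by
    rw [Finset.disjoint_left]
    intro a ha hmem
    exact (Finset.mem_sdiff.mp (hW'sub ha)).2 hmem
  have hc1 : W'.card + (S.card + 1) ≤ W.card := by
    have := Finset.card_union_of_disjoint hdisj
    calc W'.card + (S.card + 1) = (W' ∪ insert v S).card := by
          rw [this, Finset.card_insert_of_notMem hvS]
      _ ≤ W.card := Finset.card_le_card (Finset.union_subset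
          (fun a ha => (Finset.mem_sdiff.mp (hW'sub ha)).1) hins)
  have hc2 : B'.card ≤ B.card + S.card :=
    le_trans (Finset.card_le_card hB'sub) (Finset.card_union_le _ _)
  have hc1' : (W'.card : ℝ) + S.card + 1 ≤ W.card := by exact_mod_cast hc1
  have hc2' : (B'.card : ℝ) ≤ B.card + S.card := by exact_mod_cast hc2
  have hk : (3 : ℝ) ≤ S.card := by exact_mod_cast h3
  linarith
end

section
/- If a blue vertex u in the residual graph G^D has at least four white neighbors, then playing u decreases the potential f(G^D) = 5|W| + 3|B| by at least 11. -/
open SimpleGraph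
open scoped Classical

/-- A blue vertex with at least four white neighbors decreases the potential
f = 5|W| + 3|B| by at least 11 when played. -/
theorem stmt_9 {V : Type*} [Fintype V] (G : SimpleGraph V) (D : Set V) (u : V)
    (hu : isBlue G D u) (h4 : 4 ≤ whiteDeg G D u) :
    pot G (D ∪ {u}) 3 ≤ pot G D 3 - 11 := by
  classical
  set W := (Finset.univ.filter fun v => isWhite G D v) with hW
  set W' := (Finset.univ.filter fun v => isWhite G (D ∪ {u}) v) with hW'
  set B := (Finset.univ.filter fun v => isBlue G D v) with hB
  set B' := (Finset.univ.filter fun v => isBlue G (D ∪ {u}) v) with hB'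
  set N := (Finset.univ.filter fun v => G.Adj u v ∧ isWhite G D v) with hN
  have hnbhd : nbhd G (D ∪ {u}) = nbhd G D ∪ cN G u := by
    simp [nbhd, Set.biUnion_union, Set.union_comm]
  have hmono : nbhd G D ⊆ nbhd G (D ∪ {u}) := by rw [hnbhd]; exact Set.subset_union_left
  have hcN : cN G u ⊆ nbhd G (D ∪ {u}) := by rw [hnbhd]; exact Set.subset_union_right
  have huD : u ∈ nbhd G D := hu.1
  have huNotWhite : ¬ isWhite G D u := fun h => h huD
  have hNW : N ⊆ W := by
    intro v hv
    simp only [hN, hW, Finset.mem_filter] at hv ⊢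
    exact ⟨hv.1, hv.2.2⟩
  have hW'sub : W' ⊆ W \ N := by
    intro v hv
    simp only [hW', hW, hN, Finset.mem_filter, Finset.mem_sdiff] at hv ⊢
    have hwv : isWhite G (D ∪ {u}) v := hv.2
    refine ⟨⟨Finset.mem_univ v, fun h => hwv (hmono h)⟩, ?_⟩
    rintro ⟨_, hadj, -⟩
    exact hwv (hcN (Set.mem_insert_of_mem _ hadj))
  have hB'sub : B' ⊆ (B ∪ N).erase u := by
    intro v hv
    simp only [hB', Finset.mem_filter] at hv
    obtain ⟨-, hvnb, hvnr⟩ := hv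
    have hvne : v ≠ u := by
      rintro rfl
      exact hvnr hcN
    have hnotredbefore : ¬ isRed G D v := fun h => hvnr (fun x hx => hmono (h hx))
    refine Finset.mem_erase.mpr ⟨hvne, ?_⟩
    by_cases hwv : isWhite G D v
    · -- v was white, now dominated: v ∈ cN G u, v ≠ u, so adjacent
      have hv' : v ∈ cN G u := by
        rw [hnbhd] at hvnb
        rcases hvnb with h | h
        · exact absurd h hwv
        · exact h
      rcases hv' with h | h
      · exact absurd h hvne
      · exact Finset.mem_union_right _ (by simp [hN, (G.mem_neighborSet u v).mp h, hwv])
    · have : v ∈ nbhd G D := not_not.mp hwv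
      exact Finset.mem_union_left _ (by rw [hB, Finset.mem_filter]; exact ⟨Finset.mem_univ _, this, hnotredbefore⟩)
  have huB : u ∈ B := by simp [hB, hu]
  have hdisj : Disjoint B N := by
    rw [Finset.disjoint_left]
    intro v hv hv'
    simp only [hB, Finset.mem_filter] at hv
    simp only [hN, Finset.mem_filter] at hv'
    exact hv'.2.2 hv.2.1
  have hNcard : whiteDeg G D u = N.card := rfl
  have h4' : (4:ℝ) ≤ (N.card : ℝ) := by
    rw [hNcard] at h4; exact_mod_cast h4
  have hWcard : (W'.card : ℝ) ≤ (W.card : ℝ) - N.card := by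
    have h1 : W'.card ≤ (W \ N).card := Finset.card_le_card hW'sub
    have h2 : (W \ N).card = W.card - N.card := Finset.card_sdiff_of_subset hNW
    have h3 : N.card ≤ W.card := Finset.card_le_card hNW
    rw [h2] at h1
    have := Nat.cast_sub (R := ℝ) h3
    calc (W'.card : ℝ) ≤ ((W.card - N.card : ℕ) : ℝ) := by exact_mod_cast h1
      _ = (W.card : ℝ) - N.card := this
  have hBcard : (B'.card : ℝ) ≤ (B.card : ℝ) + N.card - 1 := by
    have h1 : B'.card ≤ ((B ∪ N).erase u).card := Finset.card_le_card hB'sub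
    have h2 : ((B ∪ N).erase u).card = (B ∪ N).card - 1 :=
      Finset.card_erase_of_mem (Finset.mem_union_left _ huB)
    have h3 : (B ∪ N).card = B.card + N.card := Finset.card_union_of_disjoint hdisj
    have h4 : 1 ≤ (B ∪ N).card := Finset.card_pos.mpr ⟨u, Finset.mem_union_left _ huB⟩
    rw [h2] at h1
    have := Nat.cast_sub (R := ℝ) h4
    calc (B'.card : ℝ) ≤ (((B ∪ N).card - 1 : ℕ) : ℝ) := by exact_mod_cast h1
      _ = ((B ∪ N).card : ℝ) - 1 := by rw [this, Nat.cast_one]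
      _ = (B.card : ℝ) + N.card - 1 := by rw [h3]; push_cast; ring
  have hpot1 : pot G (D ∪ {u}) 3 = 5 * (W'.card : ℝ) + 3 * (B'.card : ℝ) := rfl
  have hpot2 : pot G D 3 = 5 * (W.card : ℝ) + 3 * (B.card : ℝ) := rfl
  rw [hpot1, hpot2]
  nlinarith [hWcard, hBcard, h4']
end

section
/- If in the residual graph G^D the white vertices induce a path on j ≥ 3 vertices v₁v₂…v_j as a connected component of G^D[W], then playing v₂ makes both v₁ and v₂ red and v₃ blue or red, so the potential f = 5|W| + 3|B| decreases by at least 12. -/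
open SimpleGraph
open scoped Classical

lemma nbhd_union_singleton {V : Type*} (G : SimpleGraph V) (D : Set V) (v : V) :
    nbhd G (D ∪ {v}) = nbhd G D ∪ cN G v := by
  simp [nbhd, Set.biUnion_union, Set.union_comm]

lemma mem_cN {V : Type*} (G : SimpleGraph V) (v u : V) :
    u ∈ cN G v ↔ u = v ∨ G.Adj v u := by
  simp [cN]

/-- If the white vertices contain a path component v₀v₁…v_{j-1} (j ≥ 3) of G^D[W],
then playing v₁ makes v₀ and v₁ red, makes v₂ blue or red, and decreases the potential
f = 5|W| + 3|B| by at least 12. -/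
theorem stmt_10 {V : Type*} [Fintype V] (G : SimpleGraph V) (D : Set V)
    (j : ℕ) (hj : 3 ≤ j) (vtx : ℕ → V)
    (hinj : ∀ i k, i < j → k < j → vtx i = vtx k → i = k)
    (hwhite : ∀ i, i < j → isWhite G D (vtx i))
    (hpath : ∀ i k, i < j → k < j → (G.Adj (vtx i) (vtx k) ↔ (k = i + 1 ∨ i = k + 1)))
    (hcomp : ∀ i, i < j → ∀ u, G.Adj (vtx i) u → isWhite G D u →
      ∃ k, k < j ∧ u = vtx k) :
    isRed G (D ∪ {vtx 1}) (vtx 0) ∧ isRed G (D ∪ {vtx 1}) (vtx 1) ∧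
    (isBlue G (D ∪ {vtx 1}) (vtx 2) ∨ isRed G (D ∪ {vtx 1}) (vtx 2)) ∧
    pot G (D ∪ {vtx 1}) 3 ≤ pot G D 3 - 12 := by
  have h0j : (0:ℕ) < j := by omega
  have h1j : (1:ℕ) < j := by omega
  have h2j : (2:ℕ) < j := by omega
  have h10 : G.Adj (vtx 1) (vtx 0) := by rw [hpath 1 0 h1j h0j]; omega
  have h12 : G.Adj (vtx 1) (vtx 2) := by rw [hpath 1 2 h1j h2j]; omega
  set D' := D ∪ {vtx 1} with hD'
  have hnb : nbhd G D' = nbhd G D ∪ cN G (vtx 1) := nbhd_union_singleton G D (vtx 1)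
  -- characterization of white vertices in cN (vtx 1)
  have hWcN : ∀ v, isWhite G D v → (v ∈ cN G (vtx 1) ↔ v = vtx 0 ∨ v = vtx 1 ∨ v = vtx 2) := by
    intro v hv
    rw [mem_cN]
    constructor
    · rintro (rfl | hadj)
      · tauto
      · obtain ⟨k, hk, rfl⟩ := hcomp 1 h1j v hadj hv
        rw [hpath 1 k h1j hk] at hadj
        rcases hadj with h | h
        · right; right; rw [h]
        · left; congr 1; omega
    · rintro (rfl | rfl | rfl)
      · exact Or.inr h10
      · exact Or.inl rfl
      · exact Or.inr h12
  -- white in D' ↔ white in D and not one of v0,v1,v2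
  have hWD' : ∀ v, isWhite G D' v ↔ isWhite G D v ∧ ¬(v = vtx 0 ∨ v = vtx 1 ∨ v = vtx 2) := by
    intro v
    unfold isWhite
    rw [hnb, Set.mem_union]
    constructor
    · intro h
      have hw : isWhite G D v := fun hh => h (Or.inl hh)
      exact ⟨hw, fun hc => h (Or.inr ((hWcN v hw).2 hc))⟩
    · rintro ⟨hw, hc⟩ (h | h)
      · exact hw h
      · exact hc ((hWcN v hw).1 h)
  have hcN1sub : cN G (vtx 1) ⊆ nbhd G D' := by rw [hnb]; exact Set.subset_union_right
  have hred0 : isRed G D' (vtx 0) := by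
    intro u hu
    rw [mem_cN] at hu
    rcases hu with rfl | hadj
    · exact hcN1sub ((mem_cN G (vtx 1) (vtx 0)).2 (Or.inr h10))
    · by_cases hw : isWhite G D u
      · obtain ⟨k, hk, rfl⟩ := hcomp 0 h0j u hadj hw
        rw [hpath 0 k h0j hk] at hadj
        have : k = 1 := by omega
        subst this
        exact hcN1sub ((mem_cN G (vtx 1) (vtx 1)).2 (Or.inl rfl))
      · rw [hnb]
        exact Or.inl (not_not.1 hw)
  have hred1 : isRed G D' (vtx 1) := hcN1sub
  have hv2mem : vtx 2 ∈ nbhd G D' := hcN1sub ((mem_cN G (vtx 1) (vtx 2)).2 (Or.inr h12))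
  refine ⟨hred0, hred1, ?_, ?_⟩
  · by_cases h : isRed G D' (vtx 2)
    · exact Or.inr h
    · exact Or.inl ⟨hv2mem, h⟩
  -- potential
  · have hne01 : vtx 0 ≠ vtx 1 := fun h => by have := hinj 0 1 h0j h1j h; omega
    have hne02 : vtx 0 ≠ vtx 2 := fun h => by have := hinj 0 2 h0j h2j h; omega
    have hne12 : vtx 1 ≠ vtx 2 := fun h => by have := hinj 1 2 h1j h2j h; omega
    set W := Finset.univ.filter fun u => isWhite G D u with hW
    set W' := Finset.univ.filter fun u => isWhite G D' u with hWd
    set B := Finset.univ.filter fun u => isBlue G D u with hB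
    set B' := Finset.univ.filter fun u => isBlue G D' u with hBd
    have hT : ({vtx 0, vtx 1, vtx 2} : Finset V) ⊆ W := by
      intro v hv
      simp only [Finset.mem_insert, Finset.mem_singleton] at hv
      simp only [hW, Finset.mem_filter, Finset.mem_univ, true_and]
      rcases hv with rfl | rfl | rfl
      · exact hwhite 0 h0j
      · exact hwhite 1 h1j
      · exact hwhite 2 h2j
    have hWeq : W' = W \ ({vtx 0, vtx 1, vtx 2} : Finset V) := by
      ext v
      simp only [hW, hWd, Finset.mem_filter, Finset.mem_univ, true_and, Finset.mem_sdiff,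
        Finset.mem_insert, Finset.mem_singleton]
      rw [hWD' v]
    have hTcard : ({vtx 0, vtx 1, vtx 2} : Finset V).card = 3 := by
      rw [Finset.card_insert_of_notMem (by simp [hne01, hne02]),
        Finset.card_insert_of_notMem (by simp [hne12]), Finset.card_singleton]
    have hWcard : W'.card = W.card - 3 := by
      rw [hWeq, Finset.card_sdiff_of_subset hT, hTcard]
    have hW3 : 3 ≤ W.card := by
      calc 3 = ({vtx 0, vtx 1, vtx 2} : Finset V).card := hTcard.symm
        _ ≤ W.card := Finset.card_le_card hT
    have hBsub : B' ⊆ insert (vtx 2) B := by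
      intro v hv
      simp only [hBd, Finset.mem_filter, Finset.mem_univ, true_and] at hv
      obtain ⟨hvmem, hvnred⟩ := hv
      simp only [Finset.mem_insert, hB, Finset.mem_filter, Finset.mem_univ, true_and]
      by_cases hw : isWhite G D v
      · rw [hnb, Set.mem_union] at hvmem
        rcases hvmem with h | h
        · exact absurd h hw
        · rcases (hWcN v hw).1 h with rfl | rfl | rfl
          · exact absurd hred0 hvnred
          · exact absurd hred1 hvnred
          · exact Or.inl rfl
      · refine Or.inr ⟨not_not.1 hw, fun hr => hvnred ?_⟩
        intro u hu
        rw [hnb]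
        exact Or.inl (hr hu)
    have hBcard : B'.card ≤ B.card + 1 := by
      calc B'.card ≤ (insert (vtx 2) B).card := Finset.card_le_card hBsub
        _ ≤ B.card + 1 := Finset.card_insert_le _ _
    unfold pot
    rw [← hW, ← hWd, ← hB, ← hBd, hWcard]
    have h1 : ((W.card - 3 : ℕ) : ℝ) = (W.card : ℝ) - 3 := by
      rw [Nat.cast_sub hW3]; norm_num
    have h2 : (B'.card : ℝ) ≤ (B.card : ℝ) + 1 := by exact_mod_cast hBcard
    rw [h1]
    linarith
end
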